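/- For every infinite cardinal α, every α-regular tree has an asymmetric spanning forest with no isolated vertices. -/

import Mathlib

open Cardinal

universe u

open SimpleGraph Function
instance (o : Ordinal.{u}) : IsWellOrder o.ToType ((· < ·) : o.ToType → o.ToType → Prop) :=
  isWellOrder_lt

structure Setup (V : Type u) : Type (u+1) where
  α : Cardinal.{u}
  hα : ℵ₀ ≤ α
  T : SimpleGraph V
  hTc : T.Connected
  hTa : T.IsAcyclic
  hreg : ∀ v : V, #(T.neighborSet v) = α

namespace Setup
variable {V : Type u} (S : Setup V)

noncomputable def rt : V := S.hTc.nonempty.some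

noncomputable def pth (v : V) : S.T.Path v S.rt :=
  letI := Classical.decEq V
  (S.hTc.preconnected v S.rt).some.toPath

lemma pth_unique {v : V} (q : S.T.Walk v S.rt) (hq : q.IsPath) : q = (S.pth v).1 := by
  have := S.hTa.path_unique ⟨q, hq⟩ (S.pth v)
  exact congrArg Subtype.val this

noncomputable def dd (v : V) : ℕ := (S.pth v).1.length
noncomputable def par (v : V) : V := (S.pth v).1.getVert 1

lemma pth_rt : (S.pth S.rt).1 = Walk.nil := congrArg Subtype.val (Path.loop_eq _)

@[simp] lemma dd_rt : S.dd S.rt = 0 := by rw [dd, pth_rt]; rfl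
@[simp] lemma par_rt : S.par S.rt = S.rt := by
  rw [par, pth_rt]; rfl

lemma eq_rt_of_dd (v : V) (h : S.dd v = 0) : v = S.rt := Walk.eq_of_length_eq_zero h

lemma adj_par {v : V} (hv : v ≠ S.rt) : S.T.Adj v (S.par v) := by
  obtain ⟨u, ha, q, hq⟩ := Walk.exists_eq_cons_of_ne hv (S.pth v).1
  have : S.par v = u := by rw [par, hq, Walk.getVert_cons _ _ one_ne_zero, Nat.sub_self, Walk.getVert_zero]
  rw [this]; exact ha

lemma dd_par {v : V} (hv : v ≠ S.rt) : S.dd (S.par v) + 1 = S.dd v := by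
  obtain ⟨u, ha, q, hq⟩ := Walk.exists_eq_cons_of_ne hv (S.pth v).1
  have hu : S.par v = u := by rw [par, hq, Walk.getVert_cons _ _ one_ne_zero, Nat.sub_self, Walk.getVert_zero]
  have hqp : q.IsPath := by
    have := (S.pth v).2
    rw [hq] at this
    exact this.of_cons
  have : q = (S.pth u).1 := S.pth_unique q hqp
  rw [hu, dd, dd, hq, ← this, Walk.length_cons]

lemma par_eq_self {v : V} (h : S.par v = v) : v = S.rt := by
  by_contra hv
  exact (S.adj_par hv).ne' h

lemma no2 {c v : V} (hc : c ≠ S.rt) (h1 : S.par c = v) (h2 : S.par v = c) : False := by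
  by_cases hv : v = S.rt
  · subst hv; rw [par_rt] at h2; exact hc h2.symm
  · have e1 := S.dd_par hc
    have e2 := S.dd_par hv
    rw [h1] at e1; rw [h2] at e2
    omega

lemma adj_cases {u v : V} (h : S.T.Adj u v) : S.par v = u ∨ S.par u = v := by
  letI := Classical.decEq V
  by_cases hmem : v ∈ (S.pth u).1.support
  · right
    have ht : ((S.pth u).1.takeUntil v hmem).IsPath := (S.pth u).2.takeUntil hmem
    have hs : (Walk.cons h (Walk.nil : S.T.Walk v v)).IsPath := by simp [h.ne]
    have := S.hTa.path_unique ⟨(S.pth u).1.takeUntil v hmem, ht⟩ ⟨Walk.cons h Walk.nil, hs⟩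
    have heq : (S.pth u).1.takeUntil v hmem = Walk.cons h Walk.nil := congrArg Subtype.val this
    have hspec := Walk.take_spec (S.pth u).1 hmem
    rw [heq] at hspec
    rw [par, ← hspec, Walk.cons_append, Walk.nil_append, Walk.getVert_cons _ _ one_ne_zero, Nat.sub_self, Walk.getVert_zero]
  · left
    have hv : v ∉ (S.pth u).1.support := hmem
    have hw : (Walk.cons h.symm (S.pth u).1).IsPath := by
      rw [Walk.cons_isPath_iff]; exact ⟨(S.pth u).2, hv⟩
    have := S.pth_unique (Walk.cons h.symm (S.pth u).1) hw
    rw [par, ← this, Walk.getVert_cons _ _ one_ne_zero, Nat.sub_self, Walk.getVert_zero]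

def kidsT (v : V) : Set V := S.T.neighborSet v \ {S.par v}

lemma mem_kidsT {v c : V} : c ∈ S.kidsT v ↔ S.T.Adj v c ∧ S.par c = v := by
  constructor
  · rintro ⟨hadj, hne⟩
    refine ⟨hadj, ?_⟩
    rcases S.adj_cases hadj with h | h
    · exact h
    · exact absurd h.symm (by simpa using hne)
  · rintro ⟨hadj, hpar⟩
    refine ⟨hadj, ?_⟩
    simp only [Set.mem_singleton_iff]
    intro hcp
    have hc : c ≠ S.rt := by
      intro hcr
      rw [hcr, par_rt] at hpar
      exact hadj.ne (hpar.symm.trans hcr.symm)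
    exact S.no2 hc hpar (hcp ▸ rfl)

lemma mk_kidsT (v : V) : #(S.kidsT v) = S.α := by
  have h := S.hreg v
  apply le_antisymm
  · exact h ▸ mk_le_mk_of_subset Set.diff_subset
  · by_contra hlt
    push_neg at hlt
    have h2 : #(S.T.neighborSet v) ≤
        #((S.kidsT v ∪ {S.par v}) : Set V) := by
      apply mk_le_mk_of_subset
      intro x hx; by_cases hxa : x = S.par v <;> simp [kidsT, hxa, hx]
    have h3 := mk_union_le (S.kidsT v) ({S.par v} : Set V)
    rw [mk_singleton] at h3
    have : S.α < S.α := lt_of_le_of_lt (h ▸ (h2.trans h3))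
      (Cardinal.add_lt_of_lt S.hα hlt (lt_of_lt_of_le one_lt_aleph0 S.hα))
    exact absurd this (lt_irrefl _)

lemma mk_level : ∀ n : ℕ, #({v : V | S.dd v = n}) ≤ S.α := by
  intro n
  induction n with
  | zero =>
    have hsub : {v : V | S.dd v = 0} ⊆ {S.rt} := fun v hv => S.eq_rt_of_dd v hv
    calc #({v : V | S.dd v = 0}) ≤ #({S.rt} : Set V) := mk_le_mk_of_subset hsub
      _ = 1 := mk_singleton _
      _ ≤ S.α := le_trans (le_of_lt one_lt_aleph0) S.hα
  | succ n ih =>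
    have hsub : {v : V | S.dd v = n + 1} ⊆ ⋃ u ∈ {v : V | S.dd v = n}, S.kidsT u := by
      intro v hv
      have hvr : v ≠ S.rt := by
        intro h; rw [h] at hv; simp at hv
      have hd := S.dd_par hvr
      have hpar : S.dd (S.par v) = n := by
        have : S.dd v = n + 1 := hv
        omega
      refine Set.mem_biUnion hpar ?_
      exact S.mem_kidsT.2 ⟨(S.adj_par hvr).symm, rfl⟩
    calc #({v : V | S.dd v = n + 1})
        ≤ #(⋃ u ∈ {v : V | S.dd v = n}, S.kidsT u) := mk_le_mk_of_subset hsub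
      _ ≤ #({v : V | S.dd v = n}) * ⨆ u : {v : V | S.dd v = n}, #(S.kidsT u) :=
          mk_biUnion_le _ _
      _ ≤ S.α * S.α := by
          apply mul_le_mul' ih
          apply ciSup_le'
          intro u
          exact le_of_eq (S.mk_kidsT u)
      _ = S.α := mul_eq_self S.hα

lemma mk_V_le : #V ≤ S.α := by
  have huniv : (Set.univ : Set V) = ⋃ n : ULift.{u} ℕ, {v : V | S.dd v = n.down} := by
    ext v
    simp only [Set.mem_univ, Set.mem_iUnion, true_iff]
    exact ⟨ULift.up (S.dd v), rfl⟩
  calc #V = #(Set.univ : Set V) := mk_univ.symm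
    _ = #(⋃ n : ULift.{u} ℕ, {v : V | S.dd v = n.down}) := by rw [huniv]
    _ ≤ sum (fun n : ULift.{u} ℕ => #({v : V | S.dd v = n.down})) := mk_iUnion_le_sum_mk
    _ ≤ sum (fun _ : ULift.{u} ℕ => S.α) := sum_le_sum _ _ (fun n => S.mk_level n.down)
    _ = #(ULift.{u} ℕ) * S.α := sum_const' _ _
    _ = S.α := by rw [mk_denumerable]; exact aleph0_mul_eq S.hα

abbrev L : Type u := (Order.succ S.α).ord.ToType

noncomputable def tyi (x : S.L) : Ordinal.{u} := Ordinal.typein (α := S.L) (· < ·) x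

lemma tyi_lt_ord (x : S.L) : S.tyi x < (Order.succ S.α).ord := Ordinal.typein_lt_self x

lemma tyi_lt_tyi {x y : S.L} : S.tyi x < S.tyi y ↔ x < y := Ordinal.typein_lt_typein _

lemma tyi_inj {x y : S.L} (h : S.tyi x = S.tyi y) : x = y := Ordinal.typein_injective _ h

lemma mk_Iio_le (β : S.L) : #({i : S.L | i < β}) ≤ S.α := by
  have h1 : #({i : S.L // i < β}) = (S.tyi β).card :=
    Ordinal.card_typein (r := ((· < ·) : S.L → S.L → Prop)) β
  have h1' : #({i : S.L | i < β}) = (S.tyi β).card := h1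
  rw [h1']
  exact Order.lt_succ_iff.1 (Cardinal.lt_ord.1 (S.tyi_lt_ord β))

def AI (β : S.L) : Set S.L := {i : S.L | i < β ∧ S.tyi i ≠ 1}

lemma mk_AI_le (β : S.L) : #(S.AI β) ≤ S.α :=
  le_trans (mk_le_mk_of_subset (fun i hi => hi.1)) (S.mk_Iio_le β)

noncomputable def embE (v : V) (β : S.L) : ↥(S.AI β) ↪ ↥(S.kidsT v) :=
  Classical.choice (by
    rw [← Cardinal.le_def]
    calc #(S.AI β) ≤ S.α := S.mk_AI_le β
      _ = #(S.kidsT v) := (S.mk_kidsT v).symm)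

noncomputable def emb (v : V) (β : S.L) (i : ↥(S.AI β)) : V := (S.embE v β i : V)

lemma emb_inj {v : V} {β : S.L} : Function.Injective (S.emb v β) := fun i j h =>
  (S.embE v β).injective (Subtype.ext h)

lemma emb_mem {v : V} {β : S.L} (i : ↥(S.AI β)) : S.emb v β i ∈ S.kidsT v :=
  (S.embE v β i).2

noncomputable def embV : V ↪ S.α.ord.ToType :=
  Classical.choice (by
    rw [← Cardinal.le_def]
    calc #V ≤ S.α := S.mk_V_le
      _ = S.α.ord.card := (Cardinal.card_ord _).symm
      _ = #(S.α.ord.ToType) := (Cardinal.mk_toType _).symm)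

noncomputable def gOrd (v : V) : Ordinal.{u} :=
  Ordinal.omega0 * (1 + Ordinal.typein (α := S.α.ord.ToType) (· < ·) (S.embV v))

lemma gOrd_lt (v : V) : S.gOrd v < (Order.succ S.α).ord := by
  rw [Cardinal.lt_ord, gOrd, Ordinal.card_mul, Ordinal.card_add, Ordinal.card_omega0,
    Ordinal.card_one]
  have ht : (Ordinal.typein (α := S.α.ord.ToType) (· < ·) (S.embV v)).card ≤ S.α :=
    le_of_lt (Cardinal.lt_ord.1 (Ordinal.typein_lt_self (S.embV v)))
  have h1 : (1 : Cardinal) + (Ordinal.typein (α := S.α.ord.ToType) (· < ·) (S.embV v)).card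
      ≤ S.α :=
    by
      calc (1 : Cardinal) + (Ordinal.typein (α := S.α.ord.ToType) (· < ·) (S.embV v)).card
          ≤ S.α + S.α := add_le_add (le_trans (le_of_lt one_lt_aleph0) S.hα) ht
        _ = S.α := add_eq_self S.hα
  calc ℵ₀ * ((1 : Cardinal) + (Ordinal.typein (α := S.α.ord.ToType) (· < ·) (S.embV v)).card)
      ≤ ℵ₀ * S.α := mul_le_mul' le_rfl h1
    _ = S.α := aleph0_mul_eq S.hα
    _ < Order.succ S.α := Order.lt_succ _

lemma gOrd_limit (v : V) : Order.IsSuccLimit (S.gOrd v) :=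
  Ordinal.isSuccLimit_mul_left Ordinal.isSuccLimit_omega0
    (lt_of_lt_of_le zero_lt_one (le_self_add (a := (1 : Ordinal))))

lemma gOrd_inj : Function.Injective S.gOrd := by
  have hsm : StrictMono (fun t : Ordinal => Ordinal.omega0 * (1 + t)) := fun x y hxy =>
    mul_lt_mul_of_pos_left
      ((add_lt_add_iff_left (1 : Ordinal)).2 hxy) Ordinal.omega0_pos
  intro v w h
  exact S.embV.injective (Ordinal.typein_injective _ (hsm.injective h))

noncomputable def fcode (v : V) : S.L :=
  Ordinal.enum (α := S.L) (· < ·) ⟨S.gOrd v, by rw [Ordinal.type_toType]; exact S.gOrd_lt v⟩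

lemma tyi_fcode (v : V) : S.tyi (S.fcode v) = S.gOrd v := Ordinal.typein_enum _ _

lemma fcode_inj : Function.Injective S.fcode := by
  intro v w h
  apply S.gOrd_inj
  rw [← S.tyi_fcode v, ← S.tyi_fcode w, h]

lemma fcode_limit (v : V) : Order.IsSuccLimit (S.tyi (S.fcode v)) := by
  rw [S.tyi_fcode]; exact S.gOrd_limit v

attribute [local instance] Classical.propDecidable

noncomputable def lab (v : V) : S.L :=
  if _hv : v = S.rt then S.fcode v
  else
    if _hc : ∃ i : ↥(S.AI (lab (S.par v))), S.emb (S.par v) (lab (S.par v)) i = v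
    then (Classical.choose _hc).1
    else S.fcode v
termination_by S.dd v
decreasing_by
  all_goals (have := S.dd_par _hv; omega)

def kept (v : V) : Prop :=
  v ≠ S.rt ∧ ∃ i : ↥(S.AI (S.lab (S.par v))), S.emb (S.par v) (S.lab (S.par v)) i = v

lemma kept_ne_rt {v : V} (h : S.kept v) : v ≠ S.rt := h.1

lemma lab_of_not_kept {v : V} (h : ¬ S.kept v) : S.lab v = S.fcode v := by
  rw [lab]
  by_cases hv : v = S.rt
  · rw [dif_pos hv]
  · rw [dif_neg hv, dif_neg (fun hc => h ⟨hv, hc⟩)]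

lemma lab_of_kept {v : V} (h : S.kept v)
    {i : ↥(S.AI (S.lab (S.par v)))} (hi : S.emb (S.par v) (S.lab (S.par v)) i = v) :
    S.lab v = i.1 := by
  rw [lab, dif_neg h.1, dif_pos h.2]
  have hs := Classical.choose_spec h.2
  have : Classical.choose h.2 = i := S.emb_inj (hs.trans hi.symm)
  rw [this]

lemma lab_of_kept' {v c : V} (hpar : S.par c = v) (hne : c ≠ S.rt)
    {i : ↥(S.AI (S.lab v))} (hi : S.emb v (S.lab v) i = c) : S.lab c = i.1 := by
  subst hpar
  exact S.lab_of_kept ⟨hne, ⟨i, hi⟩⟩ hi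

def kidsF (v : V) : Set V := {c : V | S.kept c ∧ S.par c = v}

lemma emb_kid {v : V} (i : ↥(S.AI (S.lab v))) :
    S.emb v (S.lab v) i ∈ S.kidsF v ∧ S.lab (S.emb v (S.lab v) i) = i.1 := by
  have hm := S.emb_mem (v := v) (β := S.lab v) i
  rw [S.mem_kidsT] at hm
  obtain ⟨hadj, hpar⟩ := hm
  set c := S.emb v (S.lab v) i with hc
  have hcr : c ≠ S.rt := by
    intro h
    rw [h, par_rt] at hpar
    exact hadj.ne (hpar ▸ h).symm
  have hkept : S.kept c := ⟨hcr, by rw [hpar]; exact ⟨i, hc.symm⟩⟩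
  exact ⟨⟨hkept, hpar⟩, S.lab_of_kept' hpar hcr hc.symm⟩

lemma mem_kidsF_iff {v c : V} :
    c ∈ S.kidsF v ↔ ∃ i : ↥(S.AI (S.lab v)), S.emb v (S.lab v) i = c := by
  constructor
  · rintro ⟨hk, hpar⟩
    subst hpar
    exact hk.2
  · rintro ⟨i, hi⟩
    rw [← hi]
    exact (S.emb_kid i).1

lemma lab_kid_mem {v c : V} (h : c ∈ S.kidsF v) : S.lab c ∈ S.AI (S.lab v) := by
  obtain ⟨i, hi⟩ := S.mem_kidsF_iff.1 h
  have := (S.emb_kid i).2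
  rw [← hi, this]
  exact i.2

lemma lab_kidsF_injOn {v : V} {c c' : V} (hc : c ∈ S.kidsF v) (hc' : c' ∈ S.kidsF v)
    (h : S.lab c = S.lab c') : c = c' := by
  obtain ⟨i, hi⟩ := S.mem_kidsF_iff.1 hc
  obtain ⟨i', hi'⟩ := S.mem_kidsF_iff.1 hc'
  rw [← hi, ← hi', (S.emb_kid i).2, (S.emb_kid i').2] at h
  rw [← hi, ← hi', Subtype.ext h]

lemma tyi_lab_ne_one (v : V) : S.tyi (S.lab v) ≠ 1 := by
  by_cases h : S.kept v
  · exact (S.lab_kid_mem (v := S.par v) ⟨h, rfl⟩).2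
  · rw [S.lab_of_not_kept h]
    intro h1
    have hl := S.fcode_limit v
    rw [h1] at hl
    have := hl.succ_lt hl.pos
    rw [Ordinal.succ_zero] at this
    exact lt_irrefl _ this

/-- The spanning forest. -/
def Fg : SimpleGraph V where
  Adj a b := (S.kept a ∧ S.par a = b) ∨ (S.kept b ∧ S.par b = a)
  symm := ⟨fun a b h => Or.symm h⟩
  loopless := ⟨by
    intro a h
    rcases h with ⟨hk, hp⟩ | ⟨hk, hp⟩ <;> exact hk.1 (S.par_eq_self hp)⟩

lemma Fg_adj {a b : V} : S.Fg.Adj a b ↔ (a ∈ S.kidsF b ∨ b ∈ S.kidsF a) := Iff.rfl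

def Hp (φ : S.Fg ≃g S.Fg) (x y : V) : Prop :=
  φ x = y ∧ ((¬ S.kept x ∧ ¬ S.kept y) ∨ (S.kept x ∧ S.kept y ∧ φ (S.par x) = S.par y))

lemma Hp_symm {φ : S.Fg ≃g S.Fg} {x y : V} (h : S.Hp φ x y) : S.Hp φ.symm y x := by
  obtain ⟨h1, h2⟩ := h
  refine ⟨by rw [← h1]; exact φ.symm_apply_apply x, ?_⟩
  rcases h2 with ⟨ha, hb⟩ | ⟨ha, hb, hc⟩
  · exact Or.inl ⟨hb, ha⟩
  · refine Or.inr ⟨hb, ha, ?_⟩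
    rw [← hc]
    exact φ.symm_apply_apply _

lemma Hp_kid {φ : S.Fg ≃g S.Fg} {x y : V} (h : S.Hp φ x y) {c : V} (hc : c ∈ S.kidsF x) :
    φ c ∈ S.kidsF y ∧ S.Hp φ c (φ c) := by
  obtain ⟨h1, h2⟩ := h
  have hadj : S.Fg.Adj x c := Or.inr hc
  have hadj2 : S.Fg.Adj y (φ c) := by
    rw [← h1]
    exact (φ.map_adj_iff).2 hadj
  have hkid : φ c ∈ S.kidsF y := by
    rcases hadj2 with ⟨hky, hpy⟩ | hk
    · exfalso
      rcases h2 with ⟨_, hnk⟩ | ⟨_, _, hc2⟩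
      · exact hnk hky
      · have : φ c = φ (S.par x) := by rw [hc2, hpy]
        have hcx : c = S.par x := φ.injective this
        exact S.no2 (S.kept_ne_rt hc.1) hc.2 (hcx ▸ rfl)
    · exact hk
  refine ⟨hkid, rfl, Or.inr ⟨hc.1, hkid.1, ?_⟩⟩
  rw [hc.2, h1, hkid.2]

lemma lab_le_of_Hp : ∀ (l : S.L) (φ : S.Fg ≃g S.Fg) (x y : V),
    S.lab x = l → S.Hp φ x y → S.lab x ≤ S.lab y := by
  intro l
  induction l using WellFoundedLT.induction with
  | _ l IH =>
    intro φ x y hl h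
    by_contra hlt
    push_neg at hlt
    have hmem : S.lab y ∈ S.AI (S.lab x) := ⟨hlt, S.tyi_lab_ne_one y⟩
    obtain ⟨hckid, hclab⟩ := S.emb_kid (v := x) ⟨S.lab y, hmem⟩
    set c := S.emb x (S.lab x) ⟨S.lab y, hmem⟩
    obtain ⟨hφkid, hφHp⟩ := S.Hp_kid h hckid
    have h1 : S.lab c ≤ S.lab (φ c) := by
      refine IH (S.lab c) ?_ φ c (φ c) rfl hφHp
      rw [hclab]
      exact hl ▸ hlt
    have h2 : S.lab (φ c) < S.lab y := (S.lab_kid_mem hφkid).1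
    rw [hclab] at h1
    exact absurd (lt_of_le_of_lt h1 h2) (lt_irrefl _)

lemma lab_eq_of_Hp {φ : S.Fg ≃g S.Fg} {x y : V} (h : S.Hp φ x y) : S.lab x = S.lab y :=
  le_antisymm (S.lab_le_of_Hp _ φ x y rfl h)
    (S.lab_le_of_Hp _ φ.symm y x rfl (S.Hp_symm h))

lemma kept_image {φ : S.Fg ≃g S.Fg} {v : V} (hv : ¬ S.kept v) : ¬ S.kept (φ v) := by
  intro hk
  set w := φ v with hw
  set q := S.par w with hq
  have hadjwq : S.Fg.Adj w q := Or.inl ⟨hk, rfl⟩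
  set c₁ := φ.symm q with hc₁
  have hφc₁ : φ c₁ = q := φ.apply_symm_apply q
  have hadjvc₁ : S.Fg.Adj v c₁ := by
    rw [← φ.map_adj_iff, hφc₁, ← hw]
    exact hadjwq
  have hc₁kid : c₁ ∈ S.kidsF v := by
    rcases hadjvc₁ with ⟨hkv, _⟩ | hkid
    · exact absurd hkv hv
    · exact hkid
  have hlabv : S.lab v = S.fcode v := S.lab_of_not_kept hv
  have hΓ : Order.IsSuccLimit (S.tyi (S.lab v)) := by rw [hlabv]; exact S.fcode_limit v
  have hi := S.lab_kid_mem hc₁kid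
  have hio : S.tyi (S.lab c₁) < S.tyi (S.lab v) := S.tyi_lt_tyi.2 hi.1
  set jo := Order.succ (Order.succ (S.tyi (S.lab c₁))) with hjodef
  have hjo : jo < S.tyi (S.lab v) := hΓ.succ_lt (hΓ.succ_lt hio)
  have hjtype : jo < Ordinal.type ((· < ·) : S.L → S.L → Prop) := by
    rw [Ordinal.type_toType]
    exact lt_trans hjo (S.tyi_lt_ord _)
  set j := Ordinal.enum (α := S.L) (· < ·) ⟨jo, hjtype⟩ with hjdef
  have hjt : S.tyi j = jo := Ordinal.typein_enum _ _
  have hone_lt : (1 : Ordinal) < jo := by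
    calc (1 : Ordinal) = Order.succ 0 := Ordinal.succ_zero.symm
      _ ≤ Order.succ (S.tyi (S.lab c₁)) := Order.succ_le_succ zero_le
      _ < jo := Order.lt_succ _
  have hjne1 : S.tyi j ≠ 1 := by rw [hjt]; exact (ne_of_gt hone_lt)
  have hjlt : j < S.lab v := S.tyi_lt_tyi.1 (by rw [hjt]; exact hjo)
  have hjmem : j ∈ S.AI (S.lab v) := ⟨hjlt, hjne1⟩
  obtain ⟨hc₂kid, hc₂lab⟩ := S.emb_kid (v := v) ⟨j, hjmem⟩
  set c₂ := S.emb v (S.lab v) ⟨j, hjmem⟩ with hc₂def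
  have hilt : S.tyi (S.lab c₁) < jo := lt_trans (Order.lt_succ _) (Order.lt_succ _)
  have hc₂c₁ : c₂ ≠ c₁ := by
    intro he
    have : j = S.lab c₁ := by rw [he] at hc₂lab; exact hc₂lab.symm
    rw [← this, hjt] at hilt
    exact absurd hilt (lt_irrefl _)
  have hφc₂adj : S.Fg.Adj w (φ c₂) := by
    rw [hw, φ.map_adj_iff]
    exact Or.inr hc₂kid
  have hφc₂q : φ c₂ ≠ q := by
    intro he
    apply hc₂c₁
    rw [hc₁, ← he, φ.symm_apply_apply]
  have hφc₂kid : φ c₂ ∈ S.kidsF w := by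
    rcases hφc₂adj with ⟨_, hp⟩ | hkid
    · exact absurd hp.symm hφc₂q
    · exact hkid
  have hHpc₂ : S.Hp φ c₂ (φ c₂) := by
    refine ⟨rfl, Or.inr ⟨hc₂kid.1, hφc₂kid.1, ?_⟩⟩
    rw [hc₂kid.2, hφc₂kid.2, ← hw]
  have hlabφc₂ : S.lab (φ c₂) = j := by
    rw [← S.lab_eq_of_Hp hHpc₂]
    exact hc₂lab
  have hjm : S.tyi j < S.tyi (S.lab w) :=
    S.tyi_lt_tyi.2 (hlabφc₂ ▸ (S.lab_kid_mem hφc₂kid).1)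
  have hnot : ¬ (S.lab c₁ < S.lab w) := by
    intro hlt
    have hmem' : S.lab c₁ ∈ S.AI (S.lab w) := ⟨hlt, S.tyi_lab_ne_one c₁⟩
    obtain ⟨hc'kid, hc'lab⟩ := S.emb_kid (v := w) ⟨S.lab c₁, hmem'⟩
    set c' := S.emb w (S.lab w) ⟨S.lab c₁, hmem'⟩ with hc'def
    have hadj' : S.Fg.Adj v (φ.symm c') := by
      have h1 : S.Fg.Adj w c' := Or.inr hc'kid
      have h2 : S.Fg.Adj (φ.symm w) (φ.symm c') := (φ.symm.map_adj_iff).2 h1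
      rwa [hw, φ.symm_apply_apply] at h2
    have hkid' : φ.symm c' ∈ S.kidsF v := by
      rcases hadj' with ⟨hkv, _⟩ | hkid
      · exact absurd hkv hv
      · exact hkid
    have hHp' : S.Hp φ (φ.symm c') c' := by
      refine ⟨φ.apply_symm_apply c', Or.inr ⟨hkid'.1, hc'kid.1, ?_⟩⟩
      rw [hkid'.2, hc'kid.2, ← hw]
    have hlab' : S.lab (φ.symm c') = S.lab c₁ := by
      rw [S.lab_eq_of_Hp hHp']
      exact hc'lab
    have heq : φ.symm c' = c₁ := S.lab_kidsF_injOn hkid' hc₁kid hlab'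
    have hc'q : c' = q := by rw [← hφc₁, ← heq, φ.apply_symm_apply]
    exact S.no2 (S.kept_ne_rt hc'kid.1) hc'kid.2 (by rw [← hq, hc'q])
  have hm_le : S.tyi (S.lab w) ≤ S.tyi (S.lab c₁) :=
    not_lt.1 (fun hcon => hnot (S.tyi_lt_tyi.1 hcon))
  have : S.tyi (S.lab c₁) < S.tyi j := by rw [hjt]; exact hilt
  exact absurd (lt_of_lt_of_le hjm hm_le) (not_lt.2 (le_of_lt this))

lemma top_fixed {φ : S.Fg ≃g S.Fg} {v : V} (hv : ¬ S.kept v) : φ v = v := by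
  have hw : ¬ S.kept (φ v) := S.kept_image hv
  have hHp : S.Hp φ v (φ v) := ⟨rfl, Or.inl ⟨hv, hw⟩⟩
  have hl := S.lab_eq_of_Hp hHp
  rw [S.lab_of_not_kept hv, S.lab_of_not_kept hw] at hl
  exact (S.fcode_inj hl).symm

noncomputable def codist (v : V) : ℕ :=
  if h : S.kept v then codist (S.par v) + 1 else 0
termination_by S.dd v
decreasing_by have := S.dd_par (S.kept_ne_rt h); omega

lemma codist_of_kept {v : V} (h : S.kept v) : S.codist v = S.codist (S.par v) + 1 := by
  rw [codist, dif_pos h]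

lemma fixed (φ : S.Fg ≃g S.Fg) : ∀ v, φ v = v := by
  have main : ∀ n (v : V), S.codist v = n → φ v = v := by
    intro n
    induction n using Nat.strong_induction_on with
    | _ n IH =>
      intro v hn
      by_cases hv : S.kept v
      · have hd := S.codist_of_kept hv
        have hu : φ (S.par v) = S.par v := IH (S.codist (S.par v)) (by omega) _ rfl
        have hHpu : S.Hp φ (S.par v) (S.par v) := by
          refine ⟨hu, ?_⟩
          by_cases hk : S.kept (S.par v)
          · refine Or.inr ⟨hk, hk, ?_⟩
            have hd2 := S.codist_of_kept hk
            exact IH (S.codist (S.par (S.par v))) (by omega) _ rfl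
          · exact Or.inl ⟨hk, hk⟩
        have hvkid : v ∈ S.kidsF (S.par v) := ⟨hv, rfl⟩
        obtain ⟨hφkid, hφHp⟩ := S.Hp_kid hHpu hvkid
        exact S.lab_kidsF_injOn hφkid hvkid (S.lab_eq_of_Hp hφHp).symm
      · exact S.top_fixed hv
  exact fun v => main (S.codist v) v rfl

lemma Fg_le : S.Fg ≤ S.T := by
  intro a b h
  rcases h with ⟨hk, hp⟩ | ⟨hk, hp⟩
  · exact hp ▸ S.adj_par (S.kept_ne_rt hk)
  · exact (hp ▸ S.adj_par (S.kept_ne_rt hk)).symm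

lemma Fg_acyclic : S.Fg.IsAcyclic := by
  intro v c hc
  exact S.hTa (c.mapLe S.Fg_le) ((Walk.mapLe_isCycle S.Fg_le).2 hc)

lemma Fg_no_isolated (v : V) : (S.Fg.neighborSet v).Nonempty := by
  by_cases hv : S.kept v
  · exact ⟨S.par v, Or.inl ⟨hv, rfl⟩⟩
  · have hΓ : Order.IsSuccLimit (S.tyi (S.lab v)) := by
      rw [S.lab_of_not_kept hv]; exact S.fcode_limit v
    have h0 : (0 : Ordinal) < Ordinal.type ((· < ·) : S.L → S.L → Prop) := by
      rw [Ordinal.type_toType]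
      exact lt_of_lt_of_le hΓ.pos (le_of_lt (S.tyi_lt_ord (S.lab v)))
    set z := Ordinal.enum (α := S.L) (· < ·) ⟨0, h0⟩ with hzdef
    have hzt : S.tyi z = 0 := Ordinal.typein_enum _ _
    have hzmem : z ∈ S.AI (S.lab v) :=
      ⟨S.tyi_lt_tyi.1 (by rw [hzt]; exact hΓ.pos), by rw [hzt]; exact zero_ne_one⟩
    obtain ⟨hkid, -⟩ := S.emb_kid (v := v) ⟨z, hzmem⟩
    exact ⟨_, Or.inr hkid⟩

end Setup

/-- Every α-regular tree (α infinite) has an asymmetric spanning forest with no isolated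
vertices. -/
theorem stmt_5 {V : Type u} (α : Cardinal.{u}) (hα : ℵ₀ ≤ α)
    (T : SimpleGraph V) (hTc : T.Connected) (hTa : T.IsAcyclic)
    (hreg : ∀ v : V, #(T.neighborSet v) = α) :
    ∃ F : SimpleGraph V, F ≤ T ∧ F.IsAcyclic ∧
      (∀ φ : F ≃g F, ∀ x, φ x = x) ∧ (∀ v, (F.neighborSet v).Nonempty) := by
  let S : Setup V := ⟨α, hα, T, hTc, hTa, hreg⟩
  exact ⟨S.Fg, S.Fg_le, S.Fg_acyclic, fun φ x => S.fixed φ x, S.Fg_no_isolated⟩
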